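/- Let R be a reduced indecomposable commutative unital ring. Then in R[x], the set of logical powers of x equals the set of positive powers of x: f is a logical power of x if and only if f = x^n for some n ≥ 1. -/

import Mathlib

def IsLogPow {S : Type*} [CommRing S] (p f : S) : Prop :=
  p ∣ f ∧ (p - 1) ∣ (f - 1) ∧ ∀ g : S, g ∣ f → IsUnit g ∨ p ∣ g

open Polynomial

/-- In a domain, a divisor of `X^n` is of the form `C c * X^k`. -/
lemma domain_divisor_of_X_pow {D : Type*} [CommRing D] [IsDomain D] :
    ∀ (n : ℕ) (p q : D[X]), p * q = X ^ n → ∃ k c, p = C c * X ^ k := by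
  intro n
  induction n with
  | zero =>
    intro p q h
    rw [pow_zero] at h
    obtain ⟨r, hr, hrp⟩ := Polynomial.isUnit_iff.mp (IsUnit.of_mul_eq_one q h)
    exact ⟨0, r, by rw [pow_zero, mul_one, hrp]⟩
  | succ n ih =>
    intro p q h
    have h0 : p.coeff 0 * q.coeff 0 = 0 := by
      have := congrArg (fun r => Polynomial.coeff r 0) h
      simpa [Polynomial.mul_coeff_zero, Polynomial.coeff_X_pow] using this
    rcases mul_eq_zero.mp h0 with hp | hq
    · obtain ⟨p', hp'⟩ := Polynomial.X_dvd_iff.mpr hp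
      have hc : (X : D[X]) * (p' * q) = X * X ^ n := by
        rw [← mul_assoc, ← hp', h, pow_succ]; ring
      obtain ⟨k, c, hk⟩ := ih p' q (mul_left_cancel₀ Polynomial.X_ne_zero hc)
      exact ⟨k + 1, c, by rw [hp', hk, pow_succ]; ring⟩
    · obtain ⟨q', hq'⟩ := Polynomial.X_dvd_iff.mpr hq
      have hc : (X : D[X]) * (p * q') = X * X ^ n := by
        rw [show (X : D[X]) * (p * q') = p * (X * q') by ring, ← hq', h, pow_succ]; ring
      exact ih p q' (mul_left_cancel₀ Polynomial.X_ne_zero hc)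

/-- In a reduced ring, distinct coefficients of a divisor of `X^n` multiply to zero. -/
lemma coeff_orth {R : Type*} [CommRing R] [IsReduced R] (n : ℕ) (g h : R[X])
    (hgh : g * h = X ^ n) {i j : ℕ} (hij : i ≠ j) : g.coeff i * g.coeff j = 0 := by
  apply IsReduced.eq_zero _ ?_
  rw [nilpotent_iff_mem_prime]
  intro P hP
  haveI := hP
  set φ := Ideal.Quotient.mk P with hφ
  have hmap : g.map φ * h.map φ = (X : (R ⧸ P)[X]) ^ n := by
    rw [← Polynomial.map_mul, hgh, Polynomial.map_pow, Polynomial.map_X]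
  obtain ⟨k, c, hk⟩ := domain_divisor_of_X_pow n (g.map φ) (h.map φ) hmap
  have : φ (g.coeff i * g.coeff j) = 0 := by
    have hi : (g.map φ).coeff i = φ (g.coeff i) := Polynomial.coeff_map φ i
    have hj : (g.map φ).coeff j = φ (g.coeff j) := Polynomial.coeff_map φ j
    rw [map_mul, ← hi, ← hj, hk]
    simp only [Polynomial.coeff_C_mul, Polynomial.coeff_X_pow]
    rcases eq_or_ne i k with rfl | hik
    · simp [Ne.symm hij]
    · simp [hik]
  rwa [Ideal.Quotient.eq_zero_iff_mem] at this

/-- Every divisor of `X^n` in a reduced indecomposable ring is a unit or a multiple of `X`. -/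
lemma divisor_of_X_pow {R : Type*} [CommRing R] [IsReduced R] [Nontrivial R]
    (hind : ∀ e : R, IsIdempotentElem e → e = 0 ∨ e = 1)
    (n : ℕ) (g : R[X]) (hg : g ∣ X ^ n) : IsUnit g ∨ (X : R[X]) ∣ g := by
  obtain ⟨h, hh⟩ := hg
  have hgh : g * h = X ^ n := hh.symm
  set S := Finset.HasAntidiagonal.antidiagonal n with hS
  set F : ℕ × ℕ → R := fun x => g.coeff x.1 * h.coeff x.2 with hF
  have hsum : ∑ x ∈ S, F x = 1 := by
    have := Polynomial.coeff_mul g h n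
    rw [hgh, Polynomial.coeff_X_pow, if_pos rfl] at this
    exact this.symm
  have horth : ∀ x ∈ S, ∀ y ∈ S, x ≠ y → F x * F y = 0 := by
    intro x hx y hy hxy
    have hx1 : x.1 + x.2 = n := Finset.HasAntidiagonal.mem_antidiagonal.mp hx
    have hy1 : y.1 + y.2 = n := Finset.HasAntidiagonal.mem_antidiagonal.mp hy
    have h1 : x.1 ≠ y.1 := by
      intro hco
      apply hxy
      have : x.2 = y.2 := by omega
      exact Prod.ext hco this
    have : g.coeff x.1 * g.coeff y.1 = 0 := coeff_orth n g h hgh h1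
    calc F x * F y = (g.coeff x.1 * g.coeff y.1) * (h.coeff x.2 * h.coeff y.2) := by ring
      _ = 0 := by rw [this, zero_mul]
  have hidem : ∀ x ∈ S, IsIdempotentElem (F x) := by
    intro x hx
    have : F x * (∑ y ∈ S, F y) = F x * F x := by
      rw [Finset.mul_sum]
      apply Finset.sum_eq_single_of_mem x hx
      intro y hy hyx
      exact horth x hx y hy (Ne.symm hyx)
    unfold IsIdempotentElem
    rw [← this, hsum, mul_one]
  -- some F x = 1
  have hex : ∃ x ∈ S, F x = 1 := by
    by_contra hcon
    push_neg at hcon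
    have : ∀ x ∈ S, F x = 0 := by
      intro x hx
      rcases hind (F x) (hidem x hx) with h0 | h1
      · exact h0
      · exact absurd h1 (hcon x hx)
    rw [Finset.sum_eq_zero this] at hsum
    exact zero_ne_one hsum
  obtain ⟨⟨k, m⟩, hkS, hk1⟩ := hex
  simp only [hF] at hk1
  rcases Nat.eq_zero_or_pos k with rfl | hkpos
  · -- g is a unit
    left
    have hc : ∀ j : ℕ, j ≠ 0 → g.coeff j = 0 := by
      intro j hj
      have := coeff_orth n g h hgh hj
      calc g.coeff j = g.coeff j * (g.coeff 0 * h.coeff m) := by rw [hk1, mul_one]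
        _ = (g.coeff j * g.coeff 0) * h.coeff m := by ring
        _ = 0 := by rw [this, zero_mul]
    have hgc : g = C (g.coeff 0) := by
      ext i
      rcases Nat.eq_zero_or_pos i with rfl | hi
      · simp
      · rw [hc i hi.ne', Polynomial.coeff_C, if_neg hi.ne']
    rw [hgc]
    exact Polynomial.isUnit_C.mpr (IsUnit.of_mul_eq_one _ hk1)
  · right
    rw [Polynomial.X_dvd_iff]
    have horth0 : g.coeff 0 * g.coeff k = 0 := coeff_orth n g h hgh hkpos.ne
    calc g.coeff 0 = g.coeff 0 * (g.coeff k * h.coeff m) := by rw [hk1, mul_one]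
      _ = (g.coeff 0 * g.coeff k) * h.coeff m := by ring
      _ = 0 := by rw [horth0, zero_mul]

/-- Forward structure lemma. -/
lemma struct_of_divisors {R : Type*} [CommRing R] [IsReduced R] [Nontrivial R] :
    ∀ (N : ℕ) (f : R[X]), f ≠ 0 → f.natDegree ≤ N →
      (∀ g : R[X], g ∣ f → IsUnit g ∨ (X : R[X]) ∣ g) → (X : R[X]) ∣ f →
      ∃ (n : ℕ) (u : R), 1 ≤ n ∧ f = C u * X ^ n := by
  intro N
  induction N with
  | zero =>
    intro f hf0 hdeg hdiv hX
    obtain ⟨g, hg⟩ := hX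
    have hgne : g ≠ 0 := by rintro rfl; simp at hg; exact hf0 hg
    have : f.natDegree = g.natDegree + 1 := by
      rw [hg, Polynomial.natDegree_X_mul hgne]
    omega
  | succ N ih =>
    intro f hf0 hdeg hdiv hX
    obtain ⟨g, hg⟩ := hX
    have hgf : g ∣ f := ⟨X, by rw [hg]; ring⟩
    have hgne : g ≠ 0 := by rintro rfl; simp at hg; exact hf0 hg
    have hdg : f.natDegree = g.natDegree + 1 := by
      rw [hg, Polynomial.natDegree_X_mul hgne]
    rcases hdiv g hgf with hu | hXg
    · -- g is a unit: g = C u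
      obtain ⟨hc0, hcn⟩ := Polynomial.isUnit_iff_coeff_isUnit_isNilpotent.mp hu
      have hgc : g = C (g.coeff 0) := by
        ext i
        rcases Nat.eq_zero_or_pos i with rfl | hi
        · simp
        · rw [IsReduced.eq_zero _ (hcn i hi.ne'),
            Polynomial.coeff_C, if_neg hi.ne']
      exact ⟨1, g.coeff 0, le_refl 1, by rw [hg, pow_one, mul_comm, ← hgc]⟩
    · obtain ⟨n, u, hn1, hnu⟩ := ih g hgne (by omega)
        (fun p hp => hdiv p (hp.trans hgf)) hXg
      exact ⟨n + 1, u, by omega, by rw [hg, hnu, pow_succ]; ring⟩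

open Polynomial in
theorem stmt_18 {R : Type*} [CommRing R] [IsReduced R]
    (hind : ∀ e : R, IsIdempotentElem e → e = 0 ∨ e = 1)
    (f : R[X]) :
    IsLogPow (X : R[X]) f ↔ ∃ n : ℕ, 1 ≤ n ∧ f = X ^ n := by
  rcases subsingleton_or_nontrivial R with hs | hn
  · haveI : Subsingleton R[X] := inferInstance
    exact iff_of_true
      ⟨⟨0, Subsingleton.elim _ _⟩, ⟨0, Subsingleton.elim _ _⟩,
        fun g _ => Or.inl (isUnit_of_subsingleton g)⟩
      ⟨1, le_refl 1, Subsingleton.elim _ _⟩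
  constructor
  · rintro ⟨hXf, hX1, hdiv⟩
    have hf0 : f ≠ 0 := by
      rintro rfl
      have : (X - 1 : R[X]) ∣ -1 := by simpa using hX1
      have hu : IsUnit (X - 1 : R[X]) := isUnit_of_dvd_unit this (IsUnit.neg isUnit_one)
      have hnil := (Polynomial.isUnit_iff_coeff_isUnit_isNilpotent.mp hu).2 1 one_ne_zero
      have h0 : ((X : R[X]) - 1).coeff 1 = 0 := IsReduced.eq_zero _ hnil
      simp [Polynomial.coeff_one] at h0
    obtain ⟨n, u, hn1, hnu⟩ :=
      struct_of_divisors f.natDegree f hf0 (le_refl _) hdiv hXf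
    have hu1 : u = 1 := by
      obtain ⟨q, hq⟩ := hX1
      have := congrArg (Polynomial.eval 1) hq
      simp [hnu] at this
      linear_combination this
    refine ⟨n, hn1, by rw [hnu, hu1, map_one, one_mul]⟩
  · rintro ⟨n, hn1, rfl⟩
    refine ⟨dvd_pow_self X (by omega), ?_, fun g hg => divisor_of_X_pow hind n g hg⟩
    have := sub_dvd_pow_sub_pow (X : R[X]) 1 n
    simpa using this
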